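/- Let m ≥ 1, t₁,…,t_m be real numbers, cₖ := (2k)!/(2^{2k}(k!)²), and let u : ℝ → ℝ be differentiable at t₀ and satisfy Σ_{j=1}^{m} tⱼ·cⱼ·u(t)^{2j} = −t for all t in a neighborhood of t₀. Fix a real x with x² < u(t₀)². Define Y(t) := √(u(t)² − x²) · Σ_{j=1}^{m} tⱼ·Σ_{k=0}^{j−1} cₖ·x^{2(j−k)−1}·u(t)^{2k}. Then Y is differentiable at t₀ with Y′(t₀) = −x/√(u(t₀)² − x²). -/

import Mathlib

/-- The normalized central binomial coefficient cₖ = (2k)!/(2^{2k}(k!)²). -/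
noncomputable def cGD (k : ℕ) : ℝ :=
  (Nat.factorial (2 * k) : ℝ) / (2 ^ (2 * k) * (Nat.factorial k : ℝ) ^ 2)

lemma cGD_rec (k : ℕ) : (2*(k:ℝ)+2) * cGD (k+1) = (2*(k:ℝ)+1) * cGD k := by
  have e1 : 2 * (k+1) = (2*k+1) + 1 := by ring
  unfold cGD
  rw [e1, Nat.factorial_succ, Nat.factorial_succ, Nat.factorial_succ]
  have hf : ((Nat.factorial k : ℝ)) ≠ 0 := by exact_mod_cast (Nat.factorial_pos k).ne'
  have hf2 : ((Nat.factorial (2*k) : ℝ)) ≠ 0 := by exact_mod_cast (Nat.factorial_pos (2*k)).ne'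
  push_cast
  field_simp
  ring

lemma keyGD (x w : ℝ) (j : ℕ) :
    w * (∑ k ∈ Finset.range j, cGD k * x ^ (2*(j-k)-1) * w ^ (2*k))
    + (w^2 - x^2) * (∑ k ∈ Finset.range j, cGD k * x ^ (2*(j-k)-1) * ((2*(k:ℝ)) * w ^ (2*k-1)))
    = (2*(j:ℝ)) * cGD j * x * w ^ (2*j-1) := by
  induction j with
  | zero => simp
  | succ n ih =>
    rw [Finset.sum_range_succ, Finset.sum_range_succ]
    have hA : ∑ k ∈ Finset.range n, cGD k * x ^ (2*(n+1-k)-1) * w ^ (2*k)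
        = x^2 * ∑ k ∈ Finset.range n, cGD k * x ^ (2*(n-k)-1) * w ^ (2*k) := by
      rw [Finset.mul_sum]
      refine Finset.sum_congr rfl fun k hk => ?_
      have hkn : k < n := Finset.mem_range.mp hk
      have he : 2*(n+1-k)-1 = (2*(n-k)-1)+2 := by omega
      rw [he, pow_add]; ring
    have hB : ∑ k ∈ Finset.range n, cGD k * x ^ (2*(n+1-k)-1) * ((2*(k:ℝ)) * w ^ (2*k-1))
        = x^2 * ∑ k ∈ Finset.range n, cGD k * x ^ (2*(n-k)-1) * ((2*(k:ℝ)) * w ^ (2*k-1)) := by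
      rw [Finset.mul_sum]
      refine Finset.sum_congr rfl fun k hk => ?_
      have hkn : k < n := Finset.mem_range.mp hk
      have he : 2*(n+1-k)-1 = (2*(n-k)-1)+2 := by omega
      rw [he, pow_add]; ring
    rw [hA, hB]
    have he1 : 2*(n+1-n)-1 = 1 := by omega
    have he2 : 2*(n+1)-1 = 2*n+1 := by omega
    rw [he1, he2]
    have hw : (2*(n:ℝ)) * w^(2*n-1) * w^2 = (2*(n:ℝ)) * w^(2*n+1) := by
      cases n with
      | zero => simp
      | succ p =>
        have h1 : 2*(p+1)-1 = 2*p+1 := by omega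
        rw [h1]
        have h2 : 2*(p+1)+1 = (2*p+1)+2 := by omega
        rw [h2, pow_add]
        ring
    have hrec := cGD_rec n
    push_cast
    linear_combination x^2 * ih + cGD n * x * hw - x * w^(2*n+1) * hrec


/-- Derivative in t of the spectral curve ỹ(x,t) = √(u(t)²−x²)·Σⱼ tⱼ Σ_{k<j} cₖ
x^{2(j−k)−1} u(t)^{2k} of the (2m,1) minimal model: if u satisfies the leading-order
string equation Σⱼ tⱼcⱼu(t)^{2j} = −t near t₀ and x² < u(t₀)², then
∂ỹ/∂t (t₀) = −x/√(u(t₀)² − x²). -/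
theorem spectral_curve_t_derivative (m : ℕ) (hm : 1 ≤ m) (tc : ℕ → ℝ) (u : ℝ → ℝ)
    (t₀ : ℝ) (hu : DifferentiableAt ℝ u t₀)
    (hstring : ∀ᶠ t in nhds t₀,
      ∑ j ∈ Finset.Icc 1 m, tc j * cGD j * u t ^ (2 * j) = -t)
    (x : ℝ) (hx : x ^ 2 < u t₀ ^ 2) :
    HasDerivAt (fun t => Real.sqrt (u t ^ 2 - x ^ 2) *
        ∑ j ∈ Finset.Icc 1 m, tc j *
          ∑ k ∈ Finset.range j, cGD k * x ^ (2 * (j - k) - 1) * u t ^ (2 * k))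
      (-x / Real.sqrt (u t₀ ^ 2 - x ^ 2)) t₀ := by
  obtain ⟨d, hu'⟩ : ∃ d, HasDerivAt u d t₀ := ⟨_, hu.hasDerivAt⟩
  have hpos : (0:ℝ) < u t₀ ^ 2 - x ^ 2 := by linarith
  set s := Real.sqrt (u t₀ ^ 2 - x ^ 2) with hs_def
  have hs : 0 < s := Real.sqrt_pos.mpr hpos
  have hs2 : s ^ 2 = u t₀ ^ 2 - x ^ 2 := Real.sq_sqrt hpos.le
  -- derivative of the string equation
  have hF : HasDerivAt (fun t => ∑ j ∈ Finset.Icc 1 m, tc j * cGD j * u t ^ (2*j))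
      (∑ j ∈ Finset.Icc 1 m, tc j * cGD j * (((2*j : ℕ):ℝ) * u t₀ ^ (2*j-1) * d)) t₀ := by
    apply HasDerivAt.fun_sum
    intro j _
    exact (hu'.pow (2*j)).const_mul _
  have heq : (fun t => ∑ j ∈ Finset.Icc 1 m, tc j * cGD j * u t ^ (2*j))
      =ᶠ[nhds t₀] (fun t => -t) := hstring
  have hneg : HasDerivAt (fun t : ℝ => -t) (-1 : ℝ) t₀ := (hasDerivAt_id t₀).neg
  have hE : ∑ j ∈ Finset.Icc 1 m, tc j * cGD j * (((2*j : ℕ):ℝ) * u t₀ ^ (2*j-1) * d) = -1 :=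
    (hF.congr_of_eventuallyEq heq.symm).unique hneg
  -- derivative of sqrt part
  have hg : HasDerivAt (fun t => u t ^ 2 - x ^ 2) (((2:ℕ):ℝ) * u t₀ ^ (2-1) * d) t₀ :=
    (hu'.pow 2).sub_const _
  have hsqrt : HasDerivAt (fun t => Real.sqrt (u t ^ 2 - x ^ 2))
      ((((2:ℕ):ℝ) * u t₀ ^ (2-1) * d) / (2 * s)) t₀ := hg.sqrt hpos.ne'
  -- derivative of polynomial part
  have hP : HasDerivAt (fun t => ∑ j ∈ Finset.Icc 1 m, tc j *
        ∑ k ∈ Finset.range j, cGD k * x ^ (2*(j-k)-1) * u t ^ (2*k))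
      (∑ j ∈ Finset.Icc 1 m, tc j *
        ∑ k ∈ Finset.range j, cGD k * x ^ (2*(j-k)-1) * (((2*k : ℕ):ℝ) * u t₀ ^ (2*k-1) * d)) t₀ := by
    apply HasDerivAt.fun_sum
    intro j _
    apply HasDerivAt.const_mul
    apply HasDerivAt.fun_sum
    intro k _
    exact (hu'.pow (2*k)).const_mul _
  have hY := hsqrt.mul hP
  set P₀ := ∑ j ∈ Finset.Icc 1 m, tc j *
      ∑ k ∈ Finset.range j, cGD k * x ^ (2*(j-k)-1) * u t₀ ^ (2*k) with hP₀
  set p' := ∑ j ∈ Finset.Icc 1 m, tc j *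
      ∑ k ∈ Finset.range j, cGD k * x ^ (2*(j-k)-1) * (((2*k : ℕ):ℝ) * u t₀ ^ (2*k-1) * d) with hp'
  have hkey : u t₀ * d * P₀ + (u t₀ ^ 2 - x ^ 2) * p' = -x := by
    have htot : u t₀ * d * P₀ + (u t₀ ^ 2 - x ^ 2) * p'
        = x * ∑ j ∈ Finset.Icc 1 m, tc j * cGD j * (((2*j : ℕ):ℝ) * u t₀ ^ (2*j-1) * d) := by
      rw [hP₀, hp', Finset.mul_sum, Finset.mul_sum, Finset.mul_sum, ← Finset.sum_add_distrib]
      refine Finset.sum_congr rfl fun j _ => ?_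
      have hk := keyGD x (u t₀) j
      have hp : ∑ k ∈ Finset.range j, cGD k * x ^ (2*(j-k)-1) * (((2*k : ℕ):ℝ) * u t₀ ^ (2*k-1) * d)
          = d * ∑ k ∈ Finset.range j, cGD k * x ^ (2*(j-k)-1) * ((2*(k:ℝ)) * u t₀ ^ (2*k-1)) := by
        rw [Finset.mul_sum]
        refine Finset.sum_congr rfl fun k _ => ?_
        push_cast
        ring
      push_cast at hp ⊢
      linear_combination tc j * d * hk + (u t₀ ^ 2 - x ^ 2) * tc j * hp
    rw [htot, hE]
    ring
  have hfinal : (((2:ℕ):ℝ) * u t₀ ^ (2-1) * d) / (2 * s) * P₀ + s * p' = -x / s := by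
    rw [← hkey, ← hs2]
    field_simp
    ring
  rw [hfinal] at hY
  exact hY
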